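/- Let n, m ≥ 1, λ = (1^n), μ = (m). Writing Y_{T^λ} Y_{(T^μ)^{+n}} Y_{T^λ+T^μ} = ∑_ρ c_ρ ρ in ℤS_{n+m}: if ρ ∈ S_n · S_{[n+1,n+m]} then c_ρ = m!·n!·sgn(σ_ρ), where ρ = σ_ρ τ_ρ with σ_ρ ∈ S_n and τ_ρ ∈ S_{[n+1,n+m]}. -/

import Mathlib

open Finset Equiv MonoidAlgebra

namespace YS

variable {N : ℕ}

/-- The set of entries of a tableau `s` of shape `μ` with values in `Fin N`. -/
def entriesFinset (μ : YoungDiagram) (s : ↥μ.cells → Fin N) : Finset (Fin N) :=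
  μ.cells.attach.image s

/-- The entries in row `i` of the tableau `s`. -/
def rowFinset (μ : YoungDiagram) (s : ↥μ.cells → Fin N) (i : ℕ) : Finset (Fin N) :=
  (μ.cells.attach.filter (fun c => c.val.1 = i)).image s

/-- The entries in column `j` of the tableau `s`. -/
def colFinset (μ : YoungDiagram) (s : ↥μ.cells → Fin N) (j : ℕ) : Finset (Fin N) :=
  (μ.cells.attach.filter (fun c => c.val.2 = j)).image s

/-- The row stabilizer `R_s`: permutations fixing everything outside the entries of `s`
and permuting the entries within each row. -/
def rowStab (μ : YoungDiagram) (s : ↥μ.cells → Fin N) : Finset (Perm (Fin N)) :=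
  univ.filter fun σ =>
    (∀ x, x ∉ entriesFinset μ s → σ x = x) ∧
    ∀ i ∈ μ.cells.image Prod.fst, ∀ x ∈ rowFinset μ s i, σ x ∈ rowFinset μ s i

/-- The column stabilizer `C_s`. -/
def colStab (μ : YoungDiagram) (s : ↥μ.cells → Fin N) : Finset (Perm (Fin N)) :=
  univ.filter fun σ =>
    (∀ x, x ∉ entriesFinset μ s → σ x = x) ∧
    ∀ j ∈ μ.cells.image Prod.snd, ∀ x ∈ colFinset μ s j, σ x ∈ colFinset μ s j

/-- `{S} = ∑_{σ ∈ S} σ` in the integral group algebra. -/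
noncomputable def sumElt (S : Finset (Perm (Fin N))) : MonoidAlgebra ℤ (Perm (Fin N)) :=
  ∑ σ ∈ S, MonoidAlgebra.single σ 1

/-- `[S] = ∑_{σ ∈ S} sgn(σ) σ` in the integral group algebra. -/
noncomputable def altElt (S : Finset (Perm (Fin N))) : MonoidAlgebra ℤ (Perm (Fin N)) :=
  ∑ σ ∈ S, MonoidAlgebra.single σ ((Perm.sign σ : ℤˣ) : ℤ)

/-- The Young symmetrizer `Y_s = {R_s}[C_s]`. -/
noncomputable def youngSym (μ : YoungDiagram) (s : ↥μ.cells → Fin N) :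
    MonoidAlgebra ℤ (Perm (Fin N)) :=
  sumElt (rowStab μ s) * altElt (colStab μ s)

/-- The row stabilizer `R_{s+t}` of the combined tableau: row `i` of `s+t` consists of
the entries of row `i` of `s` together with those of row `i` of `t`. -/
def combRowStab (lam mu : YoungDiagram) (s : ↥lam.cells → Fin N) (t : ↥mu.cells → Fin N) :
    Finset (Perm (Fin N)) :=
  univ.filter fun σ =>
    (∀ x, x ∉ entriesFinset lam s ∪ entriesFinset mu t → σ x = x) ∧
    ∀ i ∈ lam.cells.image Prod.fst ∪ mu.cells.image Prod.fst,
      ∀ x ∈ rowFinset lam s i ∪ rowFinset mu t i, σ x ∈ rowFinset lam s i ∪ rowFinset mu t i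

/-- The column stabilizer `C_{s+t} = C_s C_t` of the combined tableau: the columns of `s+t`
are exactly the columns of `s` together with the columns of `t`. -/
def combColStab (lam mu : YoungDiagram) (s : ↥lam.cells → Fin N) (t : ↥mu.cells → Fin N) :
    Finset (Perm (Fin N)) :=
  univ.filter fun σ =>
    (∀ x, x ∉ entriesFinset lam s ∪ entriesFinset mu t → σ x = x) ∧
    (∀ j ∈ lam.cells.image Prod.snd, ∀ x ∈ colFinset lam s j, σ x ∈ colFinset lam s j) ∧
    (∀ j ∈ mu.cells.image Prod.snd, ∀ x ∈ colFinset mu t j, σ x ∈ colFinset mu t j)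

/-- The Young symmetrizer `Y_{s+t}` of the combined tableau `s+t` of shape `λ+μ`. -/
noncomputable def combYoungSym (lam mu : YoungDiagram) (s : ↥lam.cells → Fin N)
    (t : ↥mu.cells → Fin N) : MonoidAlgebra ℤ (Perm (Fin N)) :=
  sumElt (combRowStab lam mu s t) * altElt (combColStab lam mu s t)

/-- The (nonnegative) gcd of the coefficients of an element of the group algebra. -/
noncomputable def coeffGcd (f : MonoidAlgebra ℤ (Perm (Fin N))) : ℤ :=
  f.coeff.support.gcd f.coeff

end YS

/-- The column Young diagram `(1^n)`. -/
def colYD (n : ℕ) : YoungDiagram where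
  cells := Finset.range n ×ˢ {0}
  isLowerSet := by
    rintro ⟨i2, j2⟩ ⟨i1, j1⟩ ⟨hi, hj⟩ h
    simp only [Finset.coe_product, Set.mem_prod, Finset.mem_coe, Finset.mem_range,
      Finset.mem_singleton] at h ⊢
    omega

/-- The row Young diagram `(m)`. -/
def rowYD (m : ℕ) : YoungDiagram where
  cells := ({0} : Finset ℕ) ×ˢ Finset.range m
  isLowerSet := by
    rintro ⟨i2, j2⟩ ⟨i1, j1⟩ ⟨hi, hj⟩ h
    simp only [Finset.coe_product, Set.mem_prod, Finset.mem_coe, Finset.mem_range,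
      Finset.mem_singleton] at h ⊢
    omega

/-- The tableau `T^{(1^n)}` of shape `(1^n)` with entries `0, 1, …, n-1` (in `Fin (n+m)`),
reading down the unique column. -/
def colTab (n m : ℕ) : ↥(colYD n).cells → Fin (n + m) := fun c =>
  ⟨c.val.1, by
    have h := c.property
    simp only [colYD, Finset.mem_product, Finset.mem_range, Finset.mem_singleton] at h
    omega⟩

/-- The tableau `(T^{(m)})^{+n}` of shape `(m)` with entries `n, n+1, …, n+m-1`. -/
def rowTabShift (n m : ℕ) : ↥(rowYD m).cells → Fin (n + m) := fun c =>
  ⟨n + c.val.2, by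
    have h := c.property
    simp only [rowYD, Finset.mem_product, Finset.mem_range, Finset.mem_singleton] at h
    omega⟩
namespace CRAux

open Finset Equiv MonoidAlgebra YS

variable {n m : ℕ}

/-- generic: a permutation fixing all points satisfying `P` maps non-`P` points to
non-`P` points. -/
lemma not_p_apply {α : Type*} (π : Perm α) (P : α → Prop)
    (hfix : ∀ y, P y → π y = y) {x : α} (hx : ¬ P x) : ¬ P (π x) := by
  intro hpx
  have h1 : π (π x) = π x := hfix _ hpx
  have h2 : π x = x := π.injective h1
  rw [h2] at hpx
  exact hx hpx

/-- two permutations agreeing off a single point agree. -/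
lemma perm_eq_of_eq_on {α : Type*} (c g : Perm α) (x₀ : α)
    (h : ∀ x, x ≠ x₀ → c x = g x) : c = g := by
  ext x
  by_cases hx : x = x₀
  · rw [hx]
    rcases eq_or_ne (g⁻¹ (c x₀)) x₀ with hz | hz
    · have h2 := congrArg (⇑g) hz
      simpa using h2
    · exfalso
      apply hz
      apply c.injective
      rw [h _ hz]
      simp
  · exact h x hx

def φ (n m : ℕ) (σ : Perm (Fin n)) (τ : Perm (Fin m)) : Perm (Fin (n+m)) :=
  finSumFinEquiv.permCongr (σ.sumCongr τ)

lemma φ_apply_lt (σ : Perm (Fin n)) (τ : Perm (Fin m)) (x : Fin (n+m)) (h : x.val < n) :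
    (φ n m σ τ x).val = (σ ⟨x.val, h⟩).val := by
  have hs : finSumFinEquiv.symm x = Sum.inl ⟨x.val, h⟩ := by
    rw [Equiv.symm_apply_eq, finSumFinEquiv_apply_left]
    ext; rfl
  rw [φ, permCongr_apply, hs]
  simp [finSumFinEquiv_apply_left]

lemma φ_apply_ge (σ : Perm (Fin n)) (τ : Perm (Fin m)) (x : Fin (n+m)) (h : n ≤ x.val) :
    (φ n m σ τ x).val = n + (τ ⟨x.val - n, by omega⟩).val := by
  have h2 : x.val - n < m := by omega
  have hs : finSumFinEquiv.symm x = Sum.inr ⟨x.val - n, h2⟩ := by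
    rw [Equiv.symm_apply_eq, finSumFinEquiv_apply_right]
    ext; simp; omega
  rw [φ, permCongr_apply, hs]
  simp [finSumFinEquiv_apply_right]

lemma φ_mul (σ σ' : Perm (Fin n)) (τ τ' : Perm (Fin m)) :
    φ n m (σ * σ') (τ * τ') = φ n m σ τ * φ n m σ' τ' := by
  ext x
  simp [φ, permCongr_apply, ← Perm.sumCongr_mul, Perm.mul_apply]

/-! ### The three parabolic-type subsets -/

def Gs (n m : ℕ) : Finset (Perm (Fin (n+m))) :=
  univ.filter fun π => ∀ x : Fin (n+m), n ≤ x.val → π x = x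

def Hs (n m : ℕ) : Finset (Perm (Fin (n+m))) :=
  univ.filter fun π => ∀ x : Fin (n+m), x.val < n → π x = x

def Ks (n m : ℕ) : Finset (Perm (Fin (n+m))) :=
  univ.filter fun π => ∀ x : Fin (n+m), 1 ≤ x.val → x.val < n → π x = x

lemma mem_Gs {π : Perm (Fin (n+m))} :
    π ∈ Gs n m ↔ ∀ x : Fin (n+m), n ≤ x.val → π x = x := by simp [Gs]

lemma mem_Hs {π : Perm (Fin (n+m))} :
    π ∈ Hs n m ↔ ∀ x : Fin (n+m), x.val < n → π x = x := by simp [Hs]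

lemma mem_Ks {π : Perm (Fin (n+m))} :
    π ∈ Ks n m ↔ ∀ x : Fin (n+m), 1 ≤ x.val → x.val < n → π x = x := by simp [Ks]

lemma Gs_lt {π : Perm (Fin (n+m))} (hπ : π ∈ Gs n m) {x : Fin (n+m)} (h : x.val < n) :
    (π x).val < n := by
  have := not_p_apply π (fun y => n ≤ y.val) (mem_Gs.1 hπ) (x := x) (by omega)
  omega

lemma Hs_ge {π : Perm (Fin (n+m))} (hπ : π ∈ Hs n m) {x : Fin (n+m)} (h : n ≤ x.val) :
    n ≤ (π x).val := by
  have := not_p_apply π (fun y => y.val < n) (mem_Hs.1 hπ) (x := x) (by omega)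
  omega

lemma Gs_inv {π : Perm (Fin (n+m))} (hπ : π ∈ Gs n m) : π⁻¹ ∈ Gs n m := by
  rw [mem_Gs] at hπ ⊢
  intro x hx
  simpa using (congrArg (⇑π⁻¹) (hπ x hx)).symm

lemma Hs_inv {π : Perm (Fin (n+m))} (hπ : π ∈ Hs n m) : π⁻¹ ∈ Hs n m := by
  rw [mem_Hs] at hπ ⊢
  intro x hx
  simpa using (congrArg (⇑π⁻¹) (hπ x hx)).symm

lemma Gs_mul {π ρ : Perm (Fin (n+m))} (hπ : π ∈ Gs n m) (hρ : ρ ∈ Gs n m) :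
    π * ρ ∈ Gs n m := by
  rw [mem_Gs] at hπ hρ ⊢
  intro x hx
  simp [Perm.mul_apply, hρ x hx, hπ x hx]

lemma Hs_mul {π ρ : Perm (Fin (n+m))} (hπ : π ∈ Hs n m) (hρ : ρ ∈ Hs n m) :
    π * ρ ∈ Hs n m := by
  rw [mem_Hs] at hπ hρ ⊢
  intro x hx
  simp [Perm.mul_apply, hρ x hx, hπ x hx]

lemma Hs_subset_Ks : Hs n m ⊆ Ks n m := by
  intro π hπ
  rw [mem_Hs] at hπ
  rw [mem_Ks]
  intro x _ hx2
  exact hπ x hx2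

lemma comm_GH {a t : Perm (Fin (n+m))} (ha : a ∈ Gs n m) (ht : t ∈ Hs n m) :
    a * t = t * a := by
  ext x
  simp only [Perm.mul_apply]
  by_cases hx : x.val < n
  · rw [mem_Hs.1 ht x hx, mem_Hs.1 ht _ (Gs_lt ha hx)]
  · push_neg at hx
    rw [mem_Gs.1 ha x hx, mem_Gs.1 ha _ (Hs_ge ht hx)]

lemma φ_left_mem_Gs (σ : Perm (Fin n)) : φ n m σ 1 ∈ Gs n m := by
  rw [mem_Gs]
  intro x hx
  ext
  rw [φ_apply_ge σ 1 x hx]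
  simp; omega

lemma φ_right_mem_Hs (τ : Perm (Fin m)) : φ n m 1 τ ∈ Hs n m := by
  rw [mem_Hs]
  intro x hx
  ext
  rw [φ_apply_lt 1 τ x hx]
  simp


/-! ### Membership in entries/rows/columns of the two tableaux -/

lemma mem_entries_col {x : Fin (n+m)} :
    x ∈ entriesFinset (colYD n) (colTab n m) ↔ x.val < n := by
  rw [entriesFinset, mem_image]
  constructor
  · rintro ⟨c, _, rfl⟩
    have ha := c.property
    simp only [colYD, mem_product, mem_range, mem_singleton] at ha
    exact ha.1
  · intro h
    refine ⟨⟨(x.val, 0), ?_⟩, mem_attach _ _, ?_⟩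
    · simp [colYD, h]
    · ext; rfl

lemma mem_row_col {i : ℕ} {x : Fin (n+m)} :
    x ∈ rowFinset (colYD n) (colTab n m) i ↔ i < n ∧ x.val = i := by
  rw [rowFinset, mem_image]
  constructor
  · rintro ⟨c, hc, rfl⟩
    rw [mem_filter] at hc
    have h1 : c.val.1 = i := hc.2
    have ha := c.property
    simp only [colYD, mem_product, mem_range, mem_singleton] at ha
    exact ⟨by omega, h1⟩
  · rintro ⟨hi, hx⟩
    refine ⟨⟨(i, 0), ?_⟩, ?_, ?_⟩
    · simp [colYD, hi]
    · rw [mem_filter]; exact ⟨mem_attach _ _, rfl⟩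
    · ext; exact hx.symm

lemma mem_col_col {j : ℕ} {x : Fin (n+m)} :
    x ∈ colFinset (colYD n) (colTab n m) j ↔ j = 0 ∧ x.val < n := by
  rw [colFinset, mem_image]
  constructor
  · rintro ⟨c, hc, rfl⟩
    rw [mem_filter] at hc
    have h1 : c.val.2 = j := hc.2
    have ha := c.property
    simp only [colYD, mem_product, mem_range, mem_singleton] at ha
    exact ⟨by omega, ha.1⟩
  · rintro ⟨hj, hx⟩
    refine ⟨⟨(x.val, 0), ?_⟩, ?_, ?_⟩
    · simp [colYD, hx]
    · rw [mem_filter]; exact ⟨mem_attach _ _, hj.symm⟩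
    · ext; rfl

lemma mem_entries_row {x : Fin (n+m)} :
    x ∈ entriesFinset (rowYD m) (rowTabShift n m) ↔ n ≤ x.val := by
  rw [entriesFinset, mem_image]
  constructor
  · rintro ⟨c, _, rfl⟩
    exact Nat.le_add_right n _
  · intro h
    have hx2 : x.val - n < m := by omega
    refine ⟨⟨(0, x.val - n), ?_⟩, mem_attach _ _, ?_⟩
    · simp [rowYD, hx2]
    · ext; show n + (x.val - n) = x.val; omega

lemma mem_row_row {i : ℕ} {x : Fin (n+m)} :
    x ∈ rowFinset (rowYD m) (rowTabShift n m) i ↔ i = 0 ∧ n ≤ x.val := by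
  rw [rowFinset, mem_image]
  constructor
  · rintro ⟨c, hc, rfl⟩
    rw [mem_filter] at hc
    have h1 : c.val.1 = i := hc.2
    have ha := c.property
    simp only [rowYD, mem_product, mem_range, mem_singleton] at ha
    exact ⟨by omega, Nat.le_add_right n _⟩
  · rintro ⟨hi, hx⟩
    have hx2 : x.val - n < m := by omega
    refine ⟨⟨(0, x.val - n), ?_⟩, ?_, ?_⟩
    · simp [rowYD, hx2]
    · rw [mem_filter]; exact ⟨mem_attach _ _, hi.symm⟩
    · ext; show n + (x.val - n) = x.val; omega

lemma mem_col_row {j : ℕ} {x : Fin (n+m)} :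
    x ∈ colFinset (rowYD m) (rowTabShift n m) j ↔ j < m ∧ x.val = n + j := by
  rw [colFinset, mem_image]
  constructor
  · rintro ⟨c, hc, rfl⟩
    rw [mem_filter] at hc
    have h1 : c.val.2 = j := hc.2
    have ha := c.property
    simp only [rowYD, mem_product, mem_range, mem_singleton] at ha
    exact ⟨by omega, by show n + c.val.2 = n + j; omega⟩
  · rintro ⟨hj, hx⟩
    refine ⟨⟨(0, j), ?_⟩, ?_, ?_⟩
    · simp [rowYD, hj]
    · rw [mem_filter]; exact ⟨mem_attach _ _, rfl⟩
    · ext; show n + j = x.val; omega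

lemma mem_image_fst_col {i : ℕ} : i ∈ (colYD n).cells.image Prod.fst ↔ i < n := by
  rw [mem_image]
  constructor
  · rintro ⟨a, ha, rfl⟩
    simp only [colYD, mem_product, mem_range, mem_singleton] at ha
    exact ha.1
  · intro h
    exact ⟨(i, 0), by simp [colYD, h], rfl⟩

lemma mem_image_snd_col {j : ℕ} : j ∈ (colYD n).cells.image Prod.snd ↔ 0 < n ∧ j = 0 := by
  rw [mem_image]
  constructor
  · rintro ⟨a, ha, rfl⟩
    simp only [colYD, mem_product, mem_range, mem_singleton] at ha
    exact ⟨by omega, ha.2⟩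
  · rintro ⟨h1, rfl⟩
    exact ⟨(0, 0), by simp [colYD, h1], rfl⟩

lemma mem_image_fst_row {i : ℕ} : i ∈ (rowYD m).cells.image Prod.fst ↔ 0 < m ∧ i = 0 := by
  rw [mem_image]
  constructor
  · rintro ⟨a, ha, rfl⟩
    simp only [rowYD, mem_product, mem_range, mem_singleton] at ha
    exact ⟨by omega, ha.1⟩
  · rintro ⟨h1, rfl⟩
    exact ⟨(0, 0), by simp [rowYD, h1], rfl⟩

lemma mem_image_snd_row {j : ℕ} : j ∈ (rowYD m).cells.image Prod.snd ↔ j < m := by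
  rw [mem_image]
  constructor
  · rintro ⟨a, ha, rfl⟩
    simp only [rowYD, mem_product, mem_range, mem_singleton] at ha
    exact ha.2
  · intro h
    exact ⟨(0, j), by simp [rowYD, h], rfl⟩

/-! ### Identification of the stabilizers -/

lemma rowStab_col_eq : rowStab (colYD n) (colTab n m) = ({1} : Finset (Perm (Fin (n+m)))) := by
  ext π
  simp only [rowStab, mem_filter, mem_univ, true_and, mem_singleton]
  constructor
  · rintro ⟨h1, h2⟩
    ext x
    by_cases hx : x.val < n
    · have hrow := h2 x.val (mem_image_fst_col.2 hx) x (mem_row_col.2 ⟨hx, rfl⟩)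
      have := (mem_row_col.1 hrow).2
      simp [this]
    · have := h1 x (fun hc => hx (mem_entries_col.1 hc))
      simp [this]
  · rintro rfl
    exact ⟨fun x _ => rfl, fun i _ x hx => by simpa using hx⟩

lemma colStab_col_eq : colStab (colYD n) (colTab n m) = Gs n m := by
  ext π
  simp only [colStab, mem_filter, mem_univ, true_and]
  rw [mem_Gs]
  constructor
  · rintro ⟨h1, _⟩
    intro x hx
    exact h1 x (fun hc => by have := mem_entries_col.1 hc; omega)
  · intro h
    refine ⟨fun x hx => h x (by by_contra hc; exact hx (mem_entries_col.2 (by omega))), ?_⟩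
    intro j hj x hx
    obtain ⟨_, hxlt⟩ := mem_col_col.1 hx
    exact mem_col_col.2 ⟨(mem_image_snd_col.1 hj).2, Gs_lt (mem_Gs.2 h) hxlt⟩

lemma rowStab_row_eq : rowStab (rowYD m) (rowTabShift n m) = Hs n m := by
  ext π
  simp only [rowStab, mem_filter, mem_univ, true_and]
  rw [mem_Hs]
  constructor
  · rintro ⟨h1, _⟩
    intro x hx
    exact h1 x (fun hc => by have := mem_entries_row.1 hc; omega)
  · intro h
    refine ⟨fun x hx => h x (by by_contra hc; exact hx (mem_entries_row.2 (by omega))), ?_⟩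
    intro i hi x hx
    obtain ⟨hi0, hxge⟩ := mem_row_row.1 hx
    exact mem_row_row.2 ⟨hi0, Hs_ge (mem_Hs.2 h) hxge⟩

lemma colStab_row_eq : colStab (rowYD m) (rowTabShift n m) = ({1} : Finset (Perm (Fin (n+m)))) := by
  ext π
  simp only [colStab, mem_filter, mem_univ, true_and, mem_singleton]
  constructor
  · rintro ⟨h1, h2⟩
    ext x
    by_cases hx : n ≤ x.val
    · have hj : x.val - n < m := by omega
      have hxc : x ∈ colFinset (rowYD m) (rowTabShift n m) (x.val - n) :=
        mem_col_row.2 ⟨hj, by omega⟩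
      have hrow := h2 (x.val - n) (mem_image_snd_row.2 hj) x hxc
      have h5 : (π x).val = n + (x.val - n) := (mem_col_row.1 hrow).2
      have h6 : (π x).val = x.val := by omega
      simpa using h6
    · have := h1 x (fun hc => hx (mem_entries_row.1 hc))
      simp [this]
  · rintro rfl
    exact ⟨fun x _ => rfl, fun j _ x hx => by simpa using hx⟩

lemma combRowStab_eq (hn : 1 ≤ n) :
    combRowStab (colYD n) (rowYD m) (colTab n m) (rowTabShift n m) = Ks n m := by
  ext π
  simp only [combRowStab, mem_filter, mem_univ, true_and]
  rw [mem_Ks]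
  constructor
  · rintro ⟨_, h2⟩
    intro x hx1 hx2
    have hix : x.val ∈ (colYD n).cells.image Prod.fst ∪ (rowYD m).cells.image Prod.fst :=
      Finset.mem_union_left _ (mem_image_fst_col.2 hx2)
    have hxmem : x ∈ rowFinset (colYD n) (colTab n m) x.val ∪
        rowFinset (rowYD m) (rowTabShift n m) x.val :=
      Finset.mem_union_left _ (mem_row_col.2 ⟨hx2, rfl⟩)
    have := h2 x.val hix x hxmem
    rcases Finset.mem_union.1 this with h | h
    · have := (mem_row_col.1 h).2
      ext; exact this
    · obtain ⟨h0, _⟩ := mem_row_row.1 h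
      omega
  · intro h
    have hπ : π ∈ Ks n m := mem_Ks.2 h
    constructor
    · intro x hx
      exfalso
      apply hx
      by_cases hc : x.val < n
      · exact Finset.mem_union_left _ (mem_entries_col.2 hc)
      · exact Finset.mem_union_right _ (mem_entries_row.2 (by omega))
    · intro i hi x hx
      rcases Finset.mem_union.1 hx with hxl | hxr
      · obtain ⟨hin, hxi⟩ := mem_row_col.1 hxl
        by_cases hi0 : i = 0
        · -- x has value 0 or i=0 row: x.val = 0; π x val is 0 or ≥ n
          subst hi0
          have hP : ¬ (1 ≤ x.val ∧ x.val < n) := by omega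
          have hnp := not_p_apply π (fun y => 1 ≤ y.val ∧ y.val < n)
            (fun y hy => h y hy.1 hy.2) hP
          by_cases hπx : (π x).val < n
          · exact Finset.mem_union_left _ (mem_row_col.2 ⟨hn, by omega⟩)
          · exact Finset.mem_union_right _ (mem_row_row.2 ⟨rfl, by omega⟩)
        · have := h x (by omega) (by omega)
          exact Finset.mem_union_left _ (mem_row_col.2 ⟨hin, by rw [this]; exact hxi⟩)
      · obtain ⟨hi0, hxge⟩ := mem_row_row.1 hxr
        subst hi0
        have hP : ¬ (1 ≤ x.val ∧ x.val < n) := by omega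
        have hnp := not_p_apply π (fun y => 1 ≤ y.val ∧ y.val < n)
          (fun y hy => h y hy.1 hy.2) hP
        by_cases hπx : (π x).val < n
        · exact Finset.mem_union_left _ (mem_row_col.2 ⟨hn, by omega⟩)
        · exact Finset.mem_union_right _ (mem_row_row.2 ⟨rfl, by omega⟩)

lemma combColStab_eq :
    combColStab (colYD n) (rowYD m) (colTab n m) (rowTabShift n m) = Gs n m := by
  ext π
  simp only [combColStab, mem_filter, mem_univ, true_and]
  rw [mem_Gs]
  constructor
  · rintro ⟨_, _, h3⟩
    intro x hx
    have hj : x.val - n < m := by omega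
    have hxc : x ∈ colFinset (rowYD m) (rowTabShift n m) (x.val - n) :=
      mem_col_row.2 ⟨hj, by omega⟩
    have := h3 (x.val - n) (mem_image_snd_row.2 hj) x hxc
    have h4 := (mem_col_row.1 this).2
    ext; omega
  · intro h
    have hπ : π ∈ Gs n m := mem_Gs.2 h
    refine ⟨?_, ?_, ?_⟩
    · intro x hx
      exfalso
      apply hx
      by_cases hc : x.val < n
      · exact Finset.mem_union_left _ (mem_entries_col.2 hc)
      · exact Finset.mem_union_right _ (mem_entries_row.2 (by omega))
    · intro j hj x hx
      obtain ⟨hj0, hxlt⟩ := mem_col_col.1 hx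
      exact mem_col_col.2 ⟨hj0, Gs_lt hπ hxlt⟩
    · intro j hj x hx
      obtain ⟨hjm, hxv⟩ := mem_col_row.1 hx
      have := h x (by omega)
      rw [this]
      exact hx

/-! ### Cardinalities -/

noncomputable def restrG (π : Perm (Fin (n+m))) (hπ : π ∈ Gs n m) : Perm (Fin n) :=
  Equiv.ofBijective
    (fun i => ⟨(π ⟨i.val, i.isLt.trans_le (Nat.le_add_right n m)⟩).val, Gs_lt hπ i.isLt⟩)
    (Finite.injective_iff_bijective.1 (by
      intro a b hab
      have h1 := congrArg Fin.val hab
      simp only at h1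
      have h2 : π ⟨a.val, a.isLt.trans_le (Nat.le_add_right n m)⟩ =
          π ⟨b.val, b.isLt.trans_le (Nat.le_add_right n m)⟩ := Fin.ext h1
      have h3 := π.injective h2
      have h4 := congrArg Fin.val h3
      simp only at h4
      exact Fin.ext h4))

lemma restrG_apply (π : Perm (Fin (n+m))) (hπ : π ∈ Gs n m) (i : Fin n) :
    (restrG π hπ i).val = (π ⟨i.val, i.isLt.trans_le (Nat.le_add_right n m)⟩).val := rfl

lemma card_Gs : (Gs n m).card = n.factorial := by
  have h := Finset.card_bij' (s := Gs n m) (t := (univ : Finset (Perm (Fin n))))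
    (fun π hπ => restrG π hπ) (fun σ _ => φ n m σ 1)
    (fun π hπ => mem_univ _) (fun σ _ => φ_left_mem_Gs σ)
    ?_ ?_
  · rw [h]
    simp [Fintype.card_perm]
  · -- left_inv : φ (restrG π hπ) 1 = π
    intro π hπ
    ext x
    by_cases hx : x.val < n
    · rw [φ_apply_lt _ _ x hx, restrG_apply]
    · push_neg at hx
      rw [φ_apply_ge _ _ x hx]
      rw [mem_Gs.1 hπ x hx]
      simp
      omega
  · -- right_inv : restrG (φ σ 1) _ = σ
    intro σ _
    ext i
    rw [restrG_apply]
    rw [φ_apply_lt σ 1 _ i.isLt]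

noncomputable def restrH (π : Perm (Fin (n+m))) (hπ : π ∈ Hs n m) : Perm (Fin m) :=
  Equiv.ofBijective
    (fun j => ⟨(π ⟨n + j.val, by omega⟩).val - n, by
      have h1 := Hs_ge hπ (x := ⟨n + j.val, by omega⟩) (Nat.le_add_right n _)
      have h2 := (π (⟨n + j.val, by omega⟩ : Fin (n+m))).isLt
      omega⟩)
    (Finite.injective_iff_bijective.1 (by
      intro a b hab
      have h1 := congrArg Fin.val hab
      simp only at h1
      have ha := Hs_ge hπ (x := (⟨n + a.val, by omega⟩ : Fin (n+m))) (Nat.le_add_right n _)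
      have hb := Hs_ge hπ (x := (⟨n + b.val, by omega⟩ : Fin (n+m))) (Nat.le_add_right n _)
      have h2 : π ⟨n + a.val, by omega⟩ = π ⟨n + b.val, by omega⟩ := Fin.ext (by omega)
      have h3 := π.injective h2
      have h4 := congrArg Fin.val h3
      simp only at h4
      exact Fin.ext (by omega)))

lemma restrH_apply (π : Perm (Fin (n+m))) (hπ : π ∈ Hs n m) (j : Fin m) :
    (restrH π hπ j).val = (π ⟨n + j.val, by omega⟩).val - n := rfl

lemma card_Hs : (Hs n m).card = m.factorial := by
  have h := Finset.card_bij' (s := Hs n m) (t := (univ : Finset (Perm (Fin m))))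
    (fun π hπ => restrH π hπ) (fun τ _ => φ n m 1 τ)
    (fun π hπ => mem_univ _) (fun τ _ => φ_right_mem_Hs τ)
    ?_ ?_
  · rw [h]
    simp [Fintype.card_perm]
  · -- left_inv : φ 1 (restrH π hπ) = π
    intro π hπ
    ext x
    by_cases hx : x.val < n
    · rw [φ_apply_lt _ _ x hx]
      rw [mem_Hs.1 hπ x hx]
      simp
    · push_neg at hx
      rw [φ_apply_ge _ _ x hx, restrH_apply]
      have hxe : (⟨n + (x.val - n), by omega⟩ : Fin (n+m)) = x := Fin.ext (by simp; omega)
      rw [hxe]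
      have := Hs_ge hπ (x := x) hx
      omega
  · -- right_inv : restrH (φ 1 τ) _ = τ
    intro τ _
    ext j
    rw [restrH_apply]
    rw [φ_apply_ge 1 τ _ (Nat.le_add_right n _)]
    have hje : (⟨n + j.val - n, by omega⟩ : Fin m) = j := Fin.ext (by simp)
    rw [hje]
    omega

/-! ### Group-algebra preliminaries -/

lemma sumElt_one : sumElt ({1} : Finset (Perm (Fin (n+m)))) = 1 := by
  rw [sumElt, Finset.sum_singleton, MonoidAlgebra.one_def]

lemma altElt_one : altElt ({1} : Finset (Perm (Fin (n+m)))) = 1 := by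
  rw [altElt, Finset.sum_singleton, MonoidAlgebra.one_def]
  simp

/-! ### The key uniqueness/existence of factorizations -/

lemma key_exists (σ : Perm (Fin n)) (τ : Perm (Fin m)) {a b : Perm (Fin (n+m))}
    (ha : a ∈ Gs n m) (_hb : b ∈ Hs n m) :
    a * b * ((b⁻¹ * φ n m 1 τ) * (a⁻¹ * φ n m σ 1)) = φ n m σ 1 * φ n m 1 τ := by
  have hcomm : a * φ n m 1 τ = φ n m 1 τ * a := comm_GH ha (φ_right_mem_Hs τ)
  have hcomm2 : φ n m σ 1 * φ n m 1 τ = φ n m 1 τ * φ n m σ 1 :=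
    comm_GH (φ_left_mem_Gs σ) (φ_right_mem_Hs τ)
  calc a * b * ((b⁻¹ * φ n m 1 τ) * (a⁻¹ * φ n m σ 1))
      = (a * φ n m 1 τ) * (a⁻¹ * φ n m σ 1) := by group
    _ = (φ n m 1 τ * a) * (a⁻¹ * φ n m σ 1) := by rw [hcomm]
    _ = φ n m 1 τ * φ n m σ 1 := by group
    _ = φ n m σ 1 * φ n m 1 τ := hcomm2.symm

lemma key_unique (hn : 1 ≤ n) (σ : Perm (Fin n)) (τ : Perm (Fin m))
    {a b c d : Perm (Fin (n+m))} (ha : a ∈ Gs n m) (hb : b ∈ Hs n m)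
    (hc : c ∈ Ks n m) (hd : d ∈ Gs n m)
    (h : a * b * (c * d) = φ n m σ 1 * φ n m 1 τ) :
    c = b⁻¹ * φ n m 1 τ ∧ a * d = φ n m σ 1 := by
  have hσG : φ n m σ 1 ∈ Gs n m := φ_left_mem_Gs σ
  have hτH : φ n m 1 τ ∈ Hs n m := φ_right_mem_Hs τ
  have hbi : b⁻¹ ∈ Hs n m := Hs_inv hb
  have hceq : c = b⁻¹ * φ n m 1 τ := by
    apply perm_eq_of_eq_on c (b⁻¹ * φ n m 1 τ) ⟨0, by omega⟩
    intro x hx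
    have hx0 : 1 ≤ x.val := by
      rcases Nat.eq_zero_or_pos x.val with h0 | h0
      · exact absurd (Fin.ext h0) hx
      · exact h0
    by_cases hlt : x.val < n
    · rw [mem_Ks.1 hc x hx0 hlt]
      simp only [Perm.mul_apply]
      rw [mem_Hs.1 hτH x hlt, mem_Hs.1 hbi x hlt]
    · push_neg at hlt
      have hdx : d x = x := mem_Gs.1 hd x hlt
      have h0 : (a * b * (c * d)) x = (φ n m σ 1 * φ n m 1 τ) x := by rw [h]
      simp only [Perm.mul_apply] at h0
      rw [hdx] at h0
      rw [mem_Gs.1 hσG _ (Hs_ge hτH hlt)] at h0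
      -- h0 : a (b (c x)) = φ n m 1 τ x
      have hcge : n ≤ (c x).val := by
        by_contra hclt
        push_neg at hclt
        have hb1 : b (c x) = c x := mem_Hs.1 hb _ hclt
        rw [hb1] at h0
        have h2 : (a (c x)).val < n := Gs_lt ha hclt
        have h3 := Hs_ge hτH hlt
        rw [h0] at h2
        omega
      have hbge : n ≤ (b (c x)).val := Hs_ge hb hcge
      rw [mem_Gs.1 ha _ hbge] at h0
      -- h0 : b (c x) = φ n m 1 τ x
      have h4 := congrArg (⇑b⁻¹) h0
      rw [show b⁻¹ (b (c x)) = c x from b.symm_apply_apply (c x)] at h4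
      simp only [Perm.mul_apply]
      exact h4
  refine ⟨hceq, ?_⟩
  rw [hceq] at h
  have e1 : a * b * ((b⁻¹ * φ n m 1 τ) * d) = (a * φ n m 1 τ) * d := by group
  rw [e1] at h
  rw [comm_GH ha hτH] at h
  rw [comm_GH hσG hτH] at h
  rw [mul_assoc] at h
  exact mul_left_cancel h

lemma sign_φ_left (σ : Perm (Fin n)) : Perm.sign (φ n m σ 1) = Perm.sign σ := by
  rw [φ, Perm.sign_permCongr, Perm.sign_sumCongr]
  simp
end CRAux

open YS Equiv in
/-- For `λ = (1^n)`, `μ = (m)`: the coefficient of `ρ = σ_ρ τ_ρ ∈ S_n · S_{[n+1,n+m]}` in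
`Y_{T^λ} Y_{(T^μ)^{+n}} Y_{T^λ+T^μ}` equals `m! n! sgn(σ_ρ)`. -/
theorem coeff_column_row_on_parabolic (n m : ℕ) (hn : 1 ≤ n) (hm : 1 ≤ m)
    (σ : Perm (Fin n)) (τ : Perm (Fin m)) :
    (youngSym (colYD n) (colTab n m) * youngSym (rowYD m) (rowTabShift n m) *
        combYoungSym (colYD n) (rowYD m) (colTab n m) (rowTabShift n m)).coeff
      (finSumFinEquiv.permCongr (σ.sumCongr τ)) =
      (m.factorial * n.factorial : ℤ) * ((Perm.sign σ : ℤˣ) : ℤ) := by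
  have hρ : finSumFinEquiv.permCongr (σ.sumCongr τ) = CRAux.φ n m σ 1 * CRAux.φ n m 1 τ := by
    rw [← CRAux.φ_mul]
    simp [CRAux.φ]
  rw [hρ, youngSym, youngSym, combYoungSym, CRAux.rowStab_col_eq, CRAux.colStab_col_eq,
    CRAux.rowStab_row_eq, CRAux.colStab_row_eq, CRAux.combRowStab_eq hn, CRAux.combColStab_eq,
    CRAux.sumElt_one, CRAux.altElt_one, one_mul, mul_one]
  simp only [altElt, sumElt]
  simp only [Finset.sum_mul, Finset.mul_sum, MonoidAlgebra.single_mul_single, one_mul, mul_one]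
  simp only [MonoidAlgebra.coeff_sum, MonoidAlgebra.coeff_single]
  rw [Finsupp.finset_sum_apply,
    Finset.sum_congr rfl fun d _ => Finsupp.finset_sum_apply _ _ _]
  rw [Finset.sum_congr rfl fun d _ => Finset.sum_congr rfl fun c _ =>
    Finsupp.finset_sum_apply _ _ _]
  rw [Finset.sum_congr rfl fun d _ => Finset.sum_congr rfl fun c _ =>
    Finset.sum_congr rfl fun b _ => Finsupp.finset_sum_apply _ _ _]
  rw [Finset.sum_congr rfl fun d _ => Finset.sum_congr rfl fun c _ =>
    Finset.sum_congr rfl fun b _ => Finset.sum_congr rfl fun a _ =>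
      Finsupp.single_apply]
  have hτH : CRAux.φ n m 1 τ ∈ CRAux.Hs n m := CRAux.φ_right_mem_Hs τ
  have hstep1 : ∀ d ∈ CRAux.Gs n m, ∀ c ∈ CRAux.Ks n m, ∀ b ∈ CRAux.Hs n m,
      (∑ a ∈ CRAux.Gs n m,
        if a * b * (c * d) = CRAux.φ n m σ 1 * CRAux.φ n m 1 τ then
          ((Perm.sign a : ℤˣ) : ℤ) * ((Perm.sign d : ℤˣ) : ℤ) else 0) =
      (if b = CRAux.φ n m 1 τ * c⁻¹ then ((Perm.sign σ : ℤˣ) : ℤ) else 0) := by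
    intro d hd c hc b hb
    have hGa : CRAux.φ n m σ 1 * d⁻¹ ∈ CRAux.Gs n m :=
      CRAux.Gs_mul (CRAux.φ_left_mem_Gs σ) (CRAux.Gs_inv hd)
    have hcongr : ∀ a ∈ CRAux.Gs n m,
        (if a * b * (c * d) = CRAux.φ n m σ 1 * CRAux.φ n m 1 τ then
          ((Perm.sign a : ℤˣ) : ℤ) * ((Perm.sign d : ℤˣ) : ℤ) else 0) =
        (if a = CRAux.φ n m σ 1 * d⁻¹ then
          (if b = CRAux.φ n m 1 τ * c⁻¹ then
            ((Perm.sign a : ℤˣ) : ℤ) * ((Perm.sign d : ℤˣ) : ℤ) else 0) else 0) := by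
      intro a ha
      by_cases hcd : a * b * (c * d) = CRAux.φ n m σ 1 * CRAux.φ n m 1 τ
      · obtain ⟨h2, h3⟩ := CRAux.key_unique hn σ τ ha hb hc hd hcd
        have hb' : b = CRAux.φ n m 1 τ * c⁻¹ :=
          eq_mul_inv_iff_mul_eq.2 (eq_inv_mul_iff_mul_eq.1 h2)
        rw [if_pos hcd, if_pos (eq_mul_inv_iff_mul_eq.2 h3), if_pos hb']
      · rw [if_neg hcd]
        by_cases h2 : a = CRAux.φ n m σ 1 * d⁻¹
        · by_cases h3 : b = CRAux.φ n m 1 τ * c⁻¹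
          · exfalso
            apply hcd
            have hcc : c = b⁻¹ * CRAux.φ n m 1 τ := by rw [h3]; group
            have hkey := CRAux.key_exists σ τ hGa hb
            have hdd : (CRAux.φ n m σ 1 * d⁻¹)⁻¹ * CRAux.φ n m σ 1 = d := by group
            rw [hdd] at hkey
            rw [hcc, h2]
            exact hkey
          · rw [if_pos h2, if_neg h3]
        · rw [if_neg h2]
    rw [Finset.sum_congr rfl hcongr,
      Finset.sum_ite_eq' (CRAux.Gs n m) (CRAux.φ n m σ 1 * d⁻¹), if_pos hGa]
    have hsgn : Perm.sign (CRAux.φ n m σ 1 * d⁻¹) * Perm.sign d = Perm.sign σ := by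
      rw [← Perm.sign_mul, inv_mul_cancel_right, CRAux.sign_φ_left]
    by_cases h3 : b = CRAux.φ n m 1 τ * c⁻¹
    · rw [if_pos h3, if_pos h3, ← Units.val_mul, hsgn]
    · rw [if_neg h3, if_neg h3]
  have hstep2 : ∀ d ∈ CRAux.Gs n m, ∀ c ∈ CRAux.Ks n m,
      (∑ b ∈ CRAux.Hs n m, ∑ a ∈ CRAux.Gs n m,
        if a * b * (c * d) = CRAux.φ n m σ 1 * CRAux.φ n m 1 τ then
          ((Perm.sign a : ℤˣ) : ℤ) * ((Perm.sign d : ℤˣ) : ℤ) else 0) =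
      (if c ∈ CRAux.Hs n m then ((Perm.sign σ : ℤˣ) : ℤ) else 0) := by
    intro d hd c hc
    rw [Finset.sum_congr rfl (fun b hb => hstep1 d hd c hc b hb),
      Finset.sum_ite_eq' (CRAux.Hs n m) (CRAux.φ n m 1 τ * c⁻¹)]
    have hiff : (CRAux.φ n m 1 τ * c⁻¹ ∈ CRAux.Hs n m) = (c ∈ CRAux.Hs n m) := by
      apply propext
      constructor
      · intro h
        have hcc : c = (CRAux.φ n m 1 τ * c⁻¹)⁻¹ * CRAux.φ n m 1 τ := by group
        rw [hcc]
        exact CRAux.Hs_mul (CRAux.Hs_inv h) hτH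
      · intro h
        exact CRAux.Hs_mul hτH (CRAux.Hs_inv h)
    simp only [hiff]
  rw [Finset.sum_congr rfl (fun d hd => Finset.sum_congr rfl (fun c hc => hstep2 d hd c hc))]
  have hinner : (∑ c ∈ CRAux.Ks n m,
      if c ∈ CRAux.Hs n m then ((Perm.sign σ : ℤˣ) : ℤ) else 0) =
      (m.factorial : ℤ) * ((Perm.sign σ : ℤˣ) : ℤ) := by
    rw [Finset.sum_ite_mem, Finset.inter_eq_right.2 CRAux.Hs_subset_Ks, Finset.sum_const,
      CRAux.card_Hs, nsmul_eq_mul]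
  rw [Finset.sum_congr rfl (fun d _ => hinner), Finset.sum_const, CRAux.card_Gs, nsmul_eq_mul]
  push_cast
  ring
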